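/- Given two feasible flows f and g in the same flow network, the difference g − f can be decomposed as a circulation in the residual network G_f: there is a nonnegative flow in G_f, respecting residual capacities, whose net effect on each arc equals g(e) − f(e), and whose residual cost equals cost(g) − cost(f). -/

import Mathlib

open Finset

/-- A flow network: directed arcs with costs, capacities (possibly infinite),
lower bounds and vertex balances. -/
structure Network (V E : Type) where
  src : E → V
  dst : E → V
  cost : E → ℝ
  cap : E → WithTop ℝ
  low : E → ℝ
  bal : V → ℝ

variable {V E : Type}

def outflow [Fintype E] [DecidableEq V] (N : Network V E) (f : E → ℝ) (v : V) : ℝ :=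
  ∑ e, if N.src e = v then f e else 0

def inflow [Fintype E] [DecidableEq V] (N : Network V E) (f : E → ℝ) (v : V) : ℝ :=
  ∑ e, if N.dst e = v then f e else 0

/-- `f` obeys lower bounds and capacities. -/
def RespectsCap (N : Network V E) (f : E → ℝ) : Prop :=
  ∀ e, N.low e ≤ f e ∧ (f e : WithTop ℝ) ≤ N.cap e

/-- Feasible flow: capacity constraints and balance constraints. -/
def Feasible [Fintype E] [DecidableEq V] (N : Network V E) (f : E → ℝ) : Prop :=
  RespectsCap N f ∧ ∀ v, outflow N f v - inflow N f v = N.bal v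

def flowCost [Fintype E] (N : Network V E) (f : E → ℝ) : ℝ := ∑ e, N.cost e * f e

/-- Excess of a vertex: `b(v) + inflow - outflow`. -/
def excess [Fintype E] [DecidableEq V] (N : Network V E) (f : E → ℝ) (v : V) : ℝ :=
  N.bal v + inflow N f v - outflow N f v

/-- Residual steps: `Sum.inl e` is the forward residual arc of `e`,
`Sum.inr e` the backward (reverse) residual arc. -/
def stepTail (N : Network V E) : E ⊕ E → V := Sum.elim N.src N.dst
def stepHead (N : Network V E) : E ⊕ E → V := Sum.elim N.dst N.src
def stepCost (N : Network V E) : E ⊕ E → ℝ := Sum.elim N.cost (fun e => -N.cost e)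

/-- A residual step is present in the residual network `G_f`. -/
def StepOk (N : Network V E) (f : E → ℝ) : E ⊕ E → Prop :=
  Sum.elim (fun e => (f e : WithTop ℝ) < N.cap e) (fun e => N.low e < f e)

def listCost (N : Network V E) (L : List (E ⊕ E)) : ℝ := (L.map (stepCost N)).sum

/-- A (closed) directed cycle in the residual network `G_f`. -/
def IsResidCycle (N : Network V E) (f : E → ℝ) (L : List (E ⊕ E)) : Prop :=
  L ≠ [] ∧ (∀ d ∈ L, StepOk N f d) ∧
  L.Chain' (fun a b => stepHead N a = stepTail N b) ∧
  L.getLast?.map (stepHead N) = L.head?.map (stepTail N)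

/-- The residual network contains no negative-cost cycle. -/
def NoNegCycle (N : Network V E) (f : E → ℝ) : Prop :=
  ∀ L, IsResidCycle N f L → 0 ≤ listCost N L

/-- A directed path from `s` to `t` in the residual network `G_f`. -/
def IsResidPath (N : Network V E) (f : E → ℝ) (s t : V) (L : List (E ⊕ E)) : Prop :=
  (∀ d ∈ L, StepOk N f d) ∧
  L.Chain' (fun a b => stepHead N a = stepTail N b) ∧
  L.head?.map (stepTail N) = some s ∧ L.getLast?.map (stepHead N) = some t

/-- The difference of two feasible flows decomposes as a circulation in the
residual network `G_f`: a nonnegative flow on residual arcs, respecting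
residual capacities, with zero net flow at every vertex, whose net effect on
each arc is `g(e) - f(e)` and whose residual cost is `cost(g) - cost(f)`. -/
theorem stmt13 {V E : Type} [Fintype V] [Fintype E] [DecidableEq V]
    (N : Network V E) (f g : E → ℝ) (hf : Feasible N f) (hg : Feasible N g) :
    ∃ z : E ⊕ E → ℝ,
      (∀ d, 0 ≤ z d) ∧
      (∀ e, ((f e + z (Sum.inl e) : ℝ) : WithTop ℝ) ≤ N.cap e) ∧
      (∀ e, z (Sum.inr e) ≤ f e - N.low e) ∧
      (∀ v, (∑ d, if stepTail N d = v then z d else 0)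
            = ∑ d, if stepHead N d = v then z d else 0) ∧
      (∀ e, z (Sum.inl e) - z (Sum.inr e) = g e - f e) ∧
      (∑ d, stepCost N d * z d) = flowCost N g - flowCost N f := by
  refine ⟨Sum.elim (fun e => max (g e - f e) 0) (fun e => max (f e - g e) 0),
      ?_, ?_, ?_, ?_, ?_, ?_⟩
  · rintro (e | e) <;> simp [le_max_right]
  · intro e
    have h1 : f e + max (g e - f e) 0 = max (g e) (f e) := by
      rcases le_total (g e) (f e) with h | h
      · rw [max_eq_right (by linarith), max_eq_right h]; ring
      · rw [max_eq_left (by linarith), max_eq_left h]; ring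
    rw [Sum.elim_inl, h1]
    rcases le_total (g e) (f e) with h | h
    · rw [max_eq_right h]; exact (hf.1 e).2
    · rw [max_eq_left h]; exact (hg.1 e).2
  · intro e
    have h1 := (hg.1 e).1
    rcases le_total (f e) (g e) with h | h
    · simp only [Sum.elim_inr, max_eq_right (by linarith : f e - g e ≤ 0)]; linarith [(hf.1 e).1]
    · simp only [Sum.elim_inr, max_eq_left (by linarith : (0:ℝ) ≤ f e - g e)]; linarith
  · intro v
    have hfv := hf.2 v
    have hgv := hg.2 v
    simp only [Fintype.sum_sum_type, stepTail, stepHead, Sum.elim_inl, Sum.elim_inr]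
    have key : ∀ a b : ℝ, max (a - b) 0 = max (b - a) 0 + (a - b) := by
      intro a b
      rcases le_total a b with h | h
      · rw [max_eq_right (by linarith), max_eq_left (by linarith)]; ring
      · rw [max_eq_left (by linarith), max_eq_right (by linarith)]; ring
    have e1 : ∀ e, (if N.src e = v then max (g e - f e) 0 else 0)
        = (if N.src e = v then max (f e - g e) 0 else 0)
          + ((if N.src e = v then g e else 0) - (if N.src e = v then f e else 0)) := by
      intro e; split
      · exact key _ _
      · simp
    have e2 : ∀ e, (if N.dst e = v then max (f e - g e) 0 else 0)
        = (if N.dst e = v then max (g e - f e) 0 else 0)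
          + ((if N.dst e = v then f e else 0) - (if N.dst e = v then g e else 0)) := by
      intro e; split
      · exact key _ _
      · simp
    show (∑ a, (if N.src a = v then max (g a - f a) 0 else 0)) + (∑ a, (if N.dst a = v then max (f a - g a) 0 else 0))
      = (∑ a, (if N.dst a = v then max (g a - f a) 0 else 0)) + (∑ a, (if N.src a = v then max (f a - g a) 0 else 0))
    simp only [Finset.sum_congr rfl (fun e _ => e1 e), Finset.sum_congr rfl (fun e _ => e2 e),
      Finset.sum_add_distrib, Finset.sum_sub_distrib]
    have : outflow N g v - inflow N g v = outflow N f v - inflow N f v := by rw [hfv, hgv]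
    simp only [outflow, inflow] at this
    ring_nf
    ring_nf at this
    linarith
  · intro e
    simp only [Sum.elim_inl, Sum.elim_inr]
    rcases le_total (g e) (f e) with h | h
    · rw [max_eq_right (by linarith), max_eq_left (by linarith)]; ring
    · rw [max_eq_left (by linarith), max_eq_right (by linarith)]; ring
  · simp only [Fintype.sum_sum_type, stepCost, Sum.elim_inl, Sum.elim_inr, flowCost]
    have : ∀ e, N.cost e * max (g e - f e) 0 + (-N.cost e) * max (f e - g e) 0
        = N.cost e * g e - N.cost e * f e := by
      intro e
      rcases le_total (g e) (f e) with h | h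
      · rw [max_eq_right (by linarith), max_eq_left (by linarith)]; ring
      · rw [max_eq_left (by linarith), max_eq_right (by linarith)]; ring
    rw [← Finset.sum_add_distrib]
    simp only [Finset.sum_congr rfl (fun e _ => this e), Finset.sum_sub_distrib]
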